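/- Let X be a set, H ∈ ℕ, μ ∈ ℂ with μ ≠ 0, and k : X × X → ℝ a symmetric positive semidefinite base kernel. Then the matrix-valued Koopman eigenfunction kernel K^μ is positive semidefinite in the operator-valued sense: for every N ∈ ℕ, trajectories x^(1),…,x^(N) : {0,…,H} → X and vectors v^(1),…,v^(N) ∈ ℂ^{H+1}, the sum Σ_{i,j=1}^{N} (v^(i))^* · K^μ(x^(i), x^(j)) · v^(j) is a nonnegative real number. -/

import Mathlib

/-- Scalar time-discrete Koopman eigenfunction kernel
`k^μ(x,x') = (1/(H+1)²) Σ_{m,n} μ^(−m) k(x_m, x'_n) conj(μ)^(−n)`. -/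
noncomputable def kmu {X : Type*} (H : ℕ) (μ : ℂ) (k : X → X → ℝ)
    (x x' : Fin (H + 1) → X) : ℂ :=
  (1 / ((H : ℂ) + 1) ^ 2) *
    ∑ m : Fin (H + 1), ∑ n : Fin (H + 1),
      μ ^ (-((m : ℕ) : ℤ)) * (k (x m) (x' n) : ℂ) * ((starRingEnd ℂ) μ) ^ (-((n : ℕ) : ℤ))

/-- Matrix-valued time-discrete Koopman eigenfunction kernel
`K^μ(x,x')_{m,n} = μ^m conj(μ)^n k^μ(x,x')`. -/
noncomputable def Kmu {X : Type*} (H : ℕ) (μ : ℂ) (k : X → X → ℝ)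
    (x x' : Fin (H + 1) → X) : Matrix (Fin (H + 1)) (Fin (H + 1)) ℂ :=
  fun m n => μ ^ (m : ℕ) * ((starRingEnd ℂ) μ) ^ (n : ℕ) * kmu H μ k x x'

/-- Corollary 1(i): the matrix-valued Koopman eigenfunction kernel is positive
semidefinite in the operator-valued sense. -/
theorem stmt_4 {X : Type*} (H : ℕ) (μ : ℂ) (hμ : μ ≠ 0) (k : X → X → ℝ)
    (hsymm : ∀ a b, k a b = k b a)
    (hpsd : ∀ (M : ℕ) (a : Fin M → X) (c : Fin M → ℂ),
      (∑ i, ∑ j, (starRingEnd ℂ) (c i) * c j * (k (a i) (a j) : ℂ)).im = 0 ∧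
      0 ≤ (∑ i, ∑ j, (starRingEnd ℂ) (c i) * c j * (k (a i) (a j) : ℂ)).re)
    (N : ℕ) (x : Fin N → Fin (H + 1) → X) (v : Fin N → Fin (H + 1) → ℂ) :
    (∑ i, ∑ j, dotProduct (star (v i)) ((Kmu H μ k (x i) (x j)).mulVec (v j))).im = 0 ∧
    0 ≤ (∑ i, ∑ j, dotProduct (star (v i)) ((Kmu H μ k (x i) (x j)).mulVec (v j))).re := by
  classical
  set a : Fin N → ℂ := fun i => ∑ m : Fin (H+1), (starRingEnd ℂ) (v i m) * μ ^ (m:ℕ) with ha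
  have key : ∀ i j, dotProduct (star (v i)) ((Kmu H μ k (x i) (x j)).mulVec (v j))
      = a i * (starRingEnd ℂ) (a j) * kmu H μ k (x i) (x j) := by
    intro i j
    have hb : (starRingEnd ℂ) (a j) = ∑ n : Fin (H+1), ((starRingEnd ℂ) μ) ^ (n:ℕ) * v j n := by
      simp [ha, map_sum, map_mul, map_pow, mul_comm]
    rw [hb, ha]
    simp only [dotProduct, Matrix.mulVec, Kmu, Pi.star_apply, Finset.mul_sum,
      Finset.sum_mul, RCLike.star_def]
    rw [Finset.sum_comm]
    refine Finset.sum_congr rfl fun m _ => ?_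
    refine Finset.sum_congr rfl fun n _ => ?_
    ring
  set c : Fin N × Fin (H+1) → ℂ :=
    fun p => (starRingEnd ℂ) (a p.1) * ((starRingEnd ℂ) μ) ^ (-((p.2 : ℕ) : ℤ)) with hc
  have hconj : ∀ p : Fin N × Fin (H+1),
      (starRingEnd ℂ) (c p) = a p.1 * μ ^ (-((p.2 : ℕ) : ℤ)) := by
    intro p
    simp [hc, map_mul, map_zpow₀]
  set T : ℂ := ∑ p : Fin N × Fin (H+1), ∑ q : Fin N × Fin (H+1),
      (starRingEnd ℂ) (c p) * c q * (k (x p.1 p.2) (x q.1 q.2) : ℂ) with hTdef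
  have hT : T.im = 0 ∧ 0 ≤ T.re := by
    obtain ⟨h1, h2⟩ := hpsd (N * (H+1))
      (fun p => x (finProdFinEquiv.symm p).1 (finProdFinEquiv.symm p).2)
      (fun p => c (finProdFinEquiv.symm p))
    have h0 : (∑ i : Fin (N*(H+1)), ∑ j : Fin (N*(H+1)),
        (starRingEnd ℂ) (c (finProdFinEquiv.symm i)) * c (finProdFinEquiv.symm j) *
          (k (x (finProdFinEquiv.symm i).1 (finProdFinEquiv.symm i).2)
             (x (finProdFinEquiv.symm j).1 (finProdFinEquiv.symm j).2) : ℂ)) = T := by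
      rw [hTdef]
      exact Fintype.sum_equiv finProdFinEquiv.symm _ _
        (fun i => Fintype.sum_equiv finProdFinEquiv.symm _ _ (fun j => rfl))
    rw [h0] at h1 h2
    exact ⟨h1, h2⟩
  have hr : (1 / ((H : ℂ) + 1) ^ 2) = (((1:ℝ)/((H:ℝ)+1)^2 : ℝ) : ℂ) := by
    push_cast
    ring
  have hL : ∀ i j, a i * (starRingEnd ℂ) (a j) * kmu H μ k (x i) (x j)
      = ∑ m : Fin (H+1), ∑ n : Fin (H+1), (((1:ℝ)/((H:ℝ)+1)^2 : ℝ) : ℂ) *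
          ((starRingEnd ℂ) (c (i,m)) * c (j,n) * (k (x i m) (x j n) : ℂ)) := by
    intro i j
    rw [kmu, hr]
    simp only [Finset.mul_sum]
    refine Finset.sum_congr rfl fun m _ => Finset.sum_congr rfl fun n _ => ?_
    rw [hconj (i, m), hc]
    ring
  have hS : (∑ i, ∑ j, dotProduct (star (v i)) ((Kmu H μ k (x i) (x j)).mulVec (v j)))
      = (((1:ℝ)/((H:ℝ)+1)^2 : ℝ) : ℂ) * T := by
    have hT2 : T = ∑ i : Fin N, ∑ m : Fin (H+1), ∑ j : Fin N, ∑ n : Fin (H+1),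
        (starRingEnd ℂ) (c (i,m)) * c (j,n) * (k (x i m) (x j n) : ℂ) := by
      rw [hTdef]
      simp only [Fintype.sum_prod_type]
    rw [hT2]
    simp only [key, hL, Finset.mul_sum]
    refine Finset.sum_congr rfl fun i _ => ?_
    exact Finset.sum_comm
  rw [hS]
  obtain ⟨h1, h2⟩ := hT
  constructor
  · rw [Complex.mul_im]
    simp only [Complex.ofReal_im, Complex.ofReal_re, h1, mul_zero, zero_mul, add_zero]
  · rw [Complex.mul_re]
    simp only [Complex.ofReal_re, Complex.ofReal_im, h1, zero_mul, mul_zero, sub_zero]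
    apply mul_nonneg _ h2
    positivity
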